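/- Fix a positive integer parameters n, m, k, c with 1 < k < n and 1 < c < m, a real n×m data matrix X, and a column-stochastic m×c matrix θ; set V = Xθ. Then there exist a row-stochastic n×k matrix α, a row-stochastic k×n matrix β, and a column-stochastic c×m matrix γ that minimize RSS = ‖X − α(βV)γ‖² over all such triples (α, β, γ), and such that every row of the biarchetype matrix Z = βV = βXθ, viewed as a point of ℝ^c, belongs to the frontier (topological boundary) of the convex hull of the set of rows of V. -/

import Mathlib

open Matrix

/-- Row-stochastic: nonnegative entries, each row sums to 1. -/
def RowStoch {n k : ℕ} (A : Matrix (Fin n) (Fin k) ℝ) : Prop :=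
  (∀ i j, 0 ≤ A i j) ∧ ∀ i, ∑ j, A i j = 1

/-- Column-stochastic: nonnegative entries, each column sums to 1. -/
def ColStoch {m c : ℕ} (A : Matrix (Fin m) (Fin c) ℝ) : Prop :=
  (∀ i j, 0 ≤ A i j) ∧ ∀ j, ∑ i, A i j = 1

/-- Squared Frobenius norm. -/
def frob2 {n m : ℕ} (M : Matrix (Fin n) (Fin m) ℝ) : ℝ :=
  ∑ i, ∑ j, (M i j) ^ 2

lemma ray_to_frontier {E : Type*} [NormedAddCommGroup E] [NormedSpace ℝ E] {H : Set E}
    (hH : IsCompact H) {p x : E} (hp : p ∈ H) (hx : x ∈ H) (hne : x ≠ p) :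
    ∃ B ∈ frontier H, ∃ t : ℝ, 0 < t ∧ t ≤ 1 ∧ x = (1 - t) • p + t • B := by
  set d := x - p with hd
  have hd0 : d ≠ 0 := sub_ne_zero.mpr hne
  set S : Set ℝ := {s : ℝ | 1 ≤ s ∧ p + s • d ∈ H} with hS
  have h1S : (1 : ℝ) ∈ S := ⟨le_refl _, by simp [hd]; exact hx⟩
  obtain ⟨R, hR⟩ := hH.isBounded.subset_closedBall 0
  have hbdd : BddAbove S := by
    refine ⟨(R + ‖p‖) / ‖d‖, fun s hs => ?_⟩
    have h2 : ‖p + s • d‖ ≤ R := by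
      simpa using Metric.mem_closedBall.mp (hR hs.2)
    have h3 : s * ‖d‖ = ‖s • d‖ := by
      rw [norm_smul, Real.norm_eq_abs, abs_of_nonneg (le_trans zero_le_one hs.1)]
    have h4 : ‖s • d‖ ≤ ‖p + s • d‖ + ‖p‖ := by
      have := norm_add_le (p + s • d) (-p)
      simpa [add_assoc] using this
    have h5 : s * ‖d‖ ≤ R + ‖p‖ := by
      rw [h3]; exact h4.trans (by linarith)
    rw [le_div_iff₀ (norm_pos_iff.mpr hd0)]
    exact h5
  have hclosed : IsClosed S := by
    have : S = {s : ℝ | 1 ≤ s} ∩ (fun s : ℝ => p + s • d) ⁻¹' H := rfl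
    rw [this]
    exact (isClosed_le continuous_const continuous_id).inter
      (hH.isClosed.preimage (continuous_const.add (continuous_id.smul continuous_const)))
  have hsup : sSup S ∈ S := hclosed.csSup_mem ⟨1, h1S⟩ hbdd
  set s₀ := sSup S with hs₀
  have hs1 : 1 ≤ s₀ := hsup.1
  set B := p + s₀ • d with hB
  have hBH : B ∈ H := hsup.2
  have hBfr : B ∈ frontier H := by
    rw [frontier_eq_closure_inter_closure]
    constructor
    · exact subset_closure hBH
    · rw [mem_closure_iff]
      intro o ho hBo
      by_contra hcon
      push_neg at hcon
      -- o ∩ Hᶜ = ∅ means o ⊆ H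
      have hoH : o ⊆ H := by
        intro y hy
        by_contra hyH
        have : y ∈ o ∩ Hᶜ := ⟨hy, hyH⟩
        rw [hcon] at this
        exact this
      obtain ⟨ε, hε, hball⟩ := Metric.isOpen_iff.mp ho B hBo
      have hdn : 0 < ‖d‖ := norm_pos_iff.mpr hd0
      set δ := ε / (2 * ‖d‖) with hδ
      have hδ0 : 0 < δ := by positivity
      have hmem : s₀ + δ ∈ S := by
        refine ⟨by linarith, ?_⟩
        apply hoH; apply hball
        rw [Metric.mem_ball]
        have : p + (s₀ + δ) • d - B = δ • d := by
          rw [hB]; rw [add_smul]; abel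
        rw [dist_eq_norm, this, norm_smul, Real.norm_eq_abs, abs_of_pos hδ0]
        have hcalc : δ * ‖d‖ = ε / 2 := by
          rw [hδ]; field_simp
        rw [hcalc]; linarith
      have := le_csSup hbdd hmem
      linarith
  refine ⟨B, hBfr, s₀⁻¹, by positivity, inv_le_one_of_one_le₀ hs1, ?_⟩
  have hs0 : s₀ ≠ 0 := by linarith
  rw [hB, smul_add, smul_smul, inv_mul_cancel₀ hs0, one_smul, sub_smul, one_smul]
  abel_nf
  rw [hd]
  abel


lemma mem_hull_weights {n : ℕ} {E : Type*} [AddCommGroup E] [Module ℝ E]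
    (W : Fin n → E) {x : E} (hx : x ∈ convexHull ℝ (Set.range W)) :
    ∃ w : Fin n → ℝ, (∀ i, 0 ≤ w i) ∧ (∑ i, w i = 1) ∧ ∑ i, w i • W i = x := by
  rw [convexHull_range_eq_exists_affineCombination] at hx
  obtain ⟨s, w, hw0, hw1, hwx⟩ := hx
  refine ⟨fun i => if i ∈ s then w i else 0, fun i => ?_, ?_, ?_⟩
  · dsimp only; split
    · exact hw0 _ ‹_›
    · exact le_refl _
  · rw [Finset.sum_ite_mem, Finset.univ_inter]; exact hw1
  · rw [← hwx, s.affineCombination_eq_linear_combination W w hw1]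
    simp_rw [ite_smul, zero_smul]
    rw [Finset.sum_ite_mem, Finset.univ_inter]

/-- row of a stochastic-matrix product lies in the hull of the rows. -/
lemma row_mul_mem_hull {k n cc : ℕ} (β : Matrix (Fin k) (Fin n) ℝ)
    (hβ0 : ∀ g i, 0 ≤ β g i) (hβ1 : ∀ g, ∑ i, β g i = 1)
    (V : Matrix (Fin n) (Fin cc) ℝ) (g : Fin k) :
    (β * V) g ∈ convexHull ℝ (Set.range fun i : Fin n => V i) := by
  apply mem_convexHull_of_exists_fintype (β g) (fun i => V i)
    (hβ0 g) (hβ1 g) (fun i => Set.mem_range_self i)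
  funext j
  rw [Finset.sum_apply]
  simp [Matrix.mul_apply, smul_eq_mul]


lemma boundarize {n k cc : ℕ} (hk : 2 ≤ k) (hcc : 0 < cc) (W : Fin n → (Fin cc → ℝ)) :
    ∀ d : ℕ, ∀ (α : Matrix (Fin n) (Fin k) ℝ) (Z : Fin k → Fin cc → ℝ),
    RowStoch α → (∀ g, Z g ∈ convexHull ℝ (Set.range W)) →
    (∀ g : Fin k, d ≤ g.val → Z g ∈ frontier (convexHull ℝ (Set.range W))) →
    ∃ (α' : Matrix (Fin n) (Fin k) ℝ) (Z' : Fin k → Fin cc → ℝ),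
      RowStoch α' ∧ (∀ g, Z' g ∈ convexHull ℝ (Set.range W)) ∧
      (∀ g, Z' g ∈ frontier (convexHull ℝ (Set.range W))) ∧
      (∀ r : Fin n, ∑ g, α' r g • Z' g = ∑ g, α r g • Z g) := by
  intro d
  induction d with
  | zero =>
    intro α Z hα hZH hfr
    exact ⟨α, Z, hα, hZH, fun g => hfr g (Nat.zero_le _), fun r => rfl⟩
  | succ d ih =>
    intro α Z hα hZH hfr
    set H := convexHull ℝ (Set.range W) with hHdef
    have hHcpt : IsCompact H := (Set.finite_range W).isCompact_convexHull (𝕜 := ℝ)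
    have hHcl : IsClosed H := hHcpt.isClosed
    have hfrH : frontier H ⊆ H := by
      intro y hy
      have := frontier_subset_closure hy
      rwa [hHcl.closure_eq] at this
    by_cases hdk : d < k
    swap
    · exact ih α Z hα hZH
        (fun g hg => absurd (lt_of_lt_of_le g.isLt (not_lt.mp hdk)) (not_lt.mpr hg))
    set g : Fin k := ⟨d, hdk⟩ with hgdef
    by_cases hgf : Z g ∈ frontier H
    · apply ih α Z hα hZH
      intro h' hh'
      rcases eq_or_lt_of_le hh' with heq | hlt
      · have : h' = g := Fin.ext heq.symm
        rw [this]; exact hgf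
      · exact hfr h' hlt
    have hgint : Z g ∈ interior H := by
      by_contra hno
      exact hgf ⟨subset_closure (hZH g), hno⟩
    by_cases hall : ∀ h', Z h' = Z g
    · -- degenerate case: all archetypes equal, interior point
      set z := Z g with hzdef
      obtain ⟨ε, hε, hball⟩ := Metric.isOpen_iff.mp isOpen_interior _ hgint
      set e : Fin cc → ℝ := fun _ => 1 with hedef
      have henorm : ‖e‖ ≤ 1 := by
        rw [pi_norm_le_iff_of_nonneg (by norm_num)]
        intro i; simp [hedef]
      set q := z + (ε/2) • e with hqdef
      have hqH : q ∈ H := by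
        apply interior_subset
        apply hball
        rw [Metric.mem_ball, dist_eq_norm]
        have : q - z = (ε/2) • e := by rw [hqdef]; abel
        rw [this, norm_smul, Real.norm_eq_abs, abs_of_pos (by linarith)]
        nlinarith [norm_nonneg e, henorm, hε]
      have hqz : z ≠ q := by
        intro h
        have := congrFun h ⟨0, hcc⟩
        simp [hqdef, hedef] at this
        linarith
      obtain ⟨B1, hB1f, t1, _, _, _⟩ := ray_to_frontier hHcpt hqH (hZH g) hqz
      have hzB1 : z ≠ B1 := by
        intro h
        exact hB1f.2 (h ▸ hgint)
      obtain ⟨B2, hB2f, t, ht0, ht1, hzeq⟩ :=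
        ray_to_frontier hHcpt (hfrH hB1f) (hZH g) hzB1
      have hk1 : 1 < k := lt_of_lt_of_le one_lt_two hk
      set g1 : Fin k := ⟨if d = 0 then 1 else 0, by split <;> omega⟩ with hg1def
      have hg1g : g1 ≠ g := by
        intro h
        have : (if d = 0 then 1 else 0 : ℕ) = d := congrArg Fin.val h
        split at this <;> omega
      set Z' : Fin k → Fin cc → ℝ := fun h'' => if h'' = g then B1 else B2 with hZ'def
      set α' : Matrix (Fin n) (Fin k) ℝ :=
        fun r h'' => if h'' = g then (1-t) else if h'' = g1 then t else 0 with hα'def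
      refine ⟨α', Z', ⟨?_, ?_⟩, ?_, ?_, ?_⟩
      · intro r h''
        rw [hα'def]
        dsimp only
        split
        · linarith
        · split
          · linarith
          · exact le_refl _
      · intro r
        have hsp : ∀ h'' : Fin k, α' r h'' =
            (if h'' = g then (1-t) else 0) + (if h'' = g1 then t else 0) := by
          intro h''
          rw [hα'def]
          by_cases h1 : h'' = g
          · have h2 : h'' ≠ g1 := by rw [h1]; exact Ne.symm hg1g
            simp [h1, h2, (Ne.symm hg1g : ¬ g = g1)]
          · by_cases h2 : h'' = g1 <;> simp [h1, h2, hg1g]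
        rw [Finset.sum_congr rfl (fun h'' _ => hsp h''), Finset.sum_add_distrib,
          Finset.sum_ite_eq' Finset.univ g fun _ => (1-t),
          Finset.sum_ite_eq' Finset.univ g1 fun _ => t]
        simp
      · intro h''
        rw [hZ'def]; dsimp only; split
        · exact hfrH hB1f
        · exact hfrH hB2f
      · intro h''
        rw [hZ'def]; dsimp only; split
        · exact hB1f
        · exact hB2f
      · intro r
        have hsp : ∀ h'' : Fin k, α' r h'' • Z' h'' =
            (if h'' = g then (1-t) • B1 else 0) + (if h'' = g1 then t • B2 else 0) := by
          intro h''
          rw [hα'def, hZ'def]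
          by_cases h1 : h'' = g
          · have h2 : h'' ≠ g1 := by rw [h1]; exact Ne.symm hg1g
            simp [h1, h2, (Ne.symm hg1g : ¬ g = g1)]
          · by_cases h2 : h'' = g1 <;> simp [h1, h2, hg1g]
        rw [Finset.sum_congr rfl (fun h'' _ => hsp h''), Finset.sum_add_distrib,
          Finset.sum_ite_eq' Finset.univ g fun _ => (1-t) • B1,
          Finset.sum_ite_eq' Finset.univ g1 fun _ => t • B2]
        simp only [Finset.mem_univ, if_true]
        have hR : ∑ h'', α r h'' • Z h'' = z := by
          rw [Finset.sum_congr rfl (fun h'' _ => by rw [hall h''])]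
          rw [← Finset.sum_smul, hα.2 r, one_smul]
        rw [hR]
        exact hzeq.symm
    · -- main case: some other archetype differs
      push_neg at hall
      obtain ⟨h', hh'⟩ := hall
      have hh'g : h' ≠ g := fun h => hh' (by rw [h])
      obtain ⟨B, hBf, t, ht0, ht1, hzeq⟩ :=
        ray_to_frontier hHcpt (hZH h') (hZH g) (Ne.symm hh')
      set Z₂ := Function.update Z g B with hZ₂def
      set α₂ : Matrix (Fin n) (Fin k) ℝ := fun r =>
        Function.update (fun h'' => α r h'' + (if h'' = h' then (1-t) * α r g else 0))
          g (t * α r g) with hα₂def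
      have hα₂st : RowStoch α₂ := by
        constructor
        · intro r h''
          rw [hα₂def]; dsimp only
          rw [Function.update_apply]
          split
          · exact mul_nonneg (le_of_lt ht0) (hα.1 r g)
          · refine add_nonneg (hα.1 r h'') ?_
            split
            · exact mul_nonneg (by linarith) (hα.1 r g)
            · exact le_refl _
        · intro r
          rw [hα₂def]; dsimp only
          rw [Finset.sum_update_of_mem (Finset.mem_univ g), Finset.sum_add_distrib,
            Finset.sum_ite_eq' (Finset.univ \ {g}) h' fun _ => (1-t) * α r g]
          have hmem : h' ∈ Finset.univ \ {g} := by
            rw [Finset.mem_sdiff]; exact ⟨Finset.mem_univ _, by simpa using hh'g⟩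
          rw [if_pos hmem]
          have hrest : ∑ h'' ∈ Finset.univ \ {g}, α r h'' = 1 - α r g := by
            have := Finset.sum_eq_sum_sdiff_singleton_add (Finset.mem_univ g) (α r)
            rw [hα.2 r] at this
            linarith
          rw [hrest]; ring
      have hZ₂H : ∀ h'', Z₂ h'' ∈ H := by
        intro h''
        rw [hZ₂def, Function.update_apply]
        split
        · exact hfrH hBf
        · exact hZH h''
      have hZ₂fr : ∀ h'' : Fin k, d ≤ h''.val → Z₂ h'' ∈ frontier H := by
        intro h'' hd
        rw [hZ₂def, Function.update_apply]
        split
        · exact hBf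
        · rename_i hne
          have : h''.val ≠ d := fun h => hne (Fin.ext h)
          exact hfr h'' (by omega)
      obtain ⟨α', Z', hst, hmem, hfr', hfit⟩ := ih α₂ Z₂ hα₂st hZ₂H hZ₂fr
      refine ⟨α', Z', hst, hmem, hfr', fun r => (hfit r).trans ?_⟩
      have key : ∀ h'' ∈ Finset.univ \ {g}, α₂ r h'' • Z₂ h''
          = α r h'' • Z h'' + (if h'' = h' then ((1-t) * α r g) • Z h' else 0) := by
        intro h'' hmem'
        rw [Finset.mem_sdiff, Finset.mem_singleton] at hmem'
        rw [hα₂def, hZ₂def]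
        dsimp only
        rw [Function.update_apply, Function.update_apply, if_neg hmem'.2, if_neg hmem'.2]
        by_cases hc : h'' = h'
        · rw [if_pos hc, if_pos hc, hc, add_smul]
        · rw [if_neg hc, if_neg hc, add_zero, add_zero]
      have hg2 : α₂ r g • Z₂ g = (t * α r g) • B := by
        rw [hα₂def, hZ₂def]
        dsimp only
        rw [Function.update_self, Function.update_self]
      rw [Finset.sum_eq_sum_sdiff_singleton_add (Finset.mem_univ g) (fun h'' => α₂ r h'' • Z₂ h''),
        Finset.sum_congr rfl key, Finset.sum_add_distrib,
        Finset.sum_ite_eq' (Finset.univ \ {g}) h' fun _ => ((1-t) * α r g) • Z h']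
      have hmemh' : h' ∈ Finset.univ \ {g} := by
        rw [Finset.mem_sdiff]; exact ⟨Finset.mem_univ _, by simpa using hh'g⟩
      rw [if_pos hmemh', hg2,
        Finset.sum_eq_sum_sdiff_singleton_add (Finset.mem_univ g) (fun h'' => α r h'' • Z h''),
        hzeq]
      module

lemma entry_cont {a b : ℕ} (i : Fin a) (j : Fin b) :
    Continuous fun A : Matrix (Fin a) (Fin b) ℝ => A i j :=
  Continuous.matrix_elem continuous_id i j

lemma isCompact_rowStoch {a b : ℕ} :
    IsCompact {A : Matrix (Fin a) (Fin b) ℝ | RowStoch A} := by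
  have hK : IsCompact {A : Matrix (Fin a) (Fin b) ℝ | ∀ i j, A i j ∈ Set.Icc (0:ℝ) 1} := by
    have : {A : Matrix (Fin a) (Fin b) ℝ | ∀ i j, A i j ∈ Set.Icc (0:ℝ) 1} =
        Set.univ.pi (fun _ : Fin a => Set.univ.pi fun _ : Fin b => Set.Icc (0:ℝ) 1) := by
      ext A
      constructor
      · intro h i _ j _
        exact h i j
      · intro h i j
        exact h i (Set.mem_univ i) j (Set.mem_univ j)
    rw [this]
    exact isCompact_univ_pi fun i => isCompact_univ_pi fun j => isCompact_Icc
  apply hK.of_isClosed_subset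
  · have h1 : IsClosed {A : Matrix (Fin a) (Fin b) ℝ | ∀ i j, 0 ≤ A i j} := by
      have : {A : Matrix (Fin a) (Fin b) ℝ | ∀ i j, 0 ≤ A i j} =
          ⋂ i, ⋂ j, {A : Matrix (Fin a) (Fin b) ℝ | 0 ≤ A i j} := by
        ext A; simp
      rw [this]
      exact isClosed_iInter fun i => isClosed_iInter fun j =>
        isClosed_le continuous_const (entry_cont i j)
    have h2 : IsClosed {A : Matrix (Fin a) (Fin b) ℝ | ∀ i, ∑ j, A i j = 1} := by
      have : {A : Matrix (Fin a) (Fin b) ℝ | ∀ i, ∑ j, A i j = 1} =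
          ⋂ i, {A : Matrix (Fin a) (Fin b) ℝ | ∑ j, A i j = 1} := by
        ext A; simp
      rw [this]
      exact isClosed_iInter fun i =>
        isClosed_eq (continuous_finset_sum _ fun j _ => entry_cont i j) continuous_const
    exact h1.inter h2
  · rintro A ⟨h0, h1⟩ 
    intro i j
    refine ⟨h0 i j, ?_⟩
    rw [← h1 i]
    exact Finset.single_le_sum (fun j' _ => h0 i j') (Finset.mem_univ j)

lemma isCompact_colStoch {a b : ℕ} :
    IsCompact {A : Matrix (Fin a) (Fin b) ℝ | ColStoch A} := by
  have hK : IsCompact {A : Matrix (Fin a) (Fin b) ℝ | ∀ i j, A i j ∈ Set.Icc (0:ℝ) 1} := by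
    have : {A : Matrix (Fin a) (Fin b) ℝ | ∀ i j, A i j ∈ Set.Icc (0:ℝ) 1} =
        Set.univ.pi (fun _ : Fin a => Set.univ.pi fun _ : Fin b => Set.Icc (0:ℝ) 1) := by
      ext A
      constructor
      · intro h i _ j _
        exact h i j
      · intro h i j
        exact h i (Set.mem_univ i) j (Set.mem_univ j)
    rw [this]
    exact isCompact_univ_pi fun i => isCompact_univ_pi fun j => isCompact_Icc
  apply hK.of_isClosed_subset
  · have h1 : IsClosed {A : Matrix (Fin a) (Fin b) ℝ | ∀ i j, 0 ≤ A i j} := by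
      have : {A : Matrix (Fin a) (Fin b) ℝ | ∀ i j, 0 ≤ A i j} =
          ⋂ i, ⋂ j, {A : Matrix (Fin a) (Fin b) ℝ | 0 ≤ A i j} := by
        ext A; simp
      rw [this]
      exact isClosed_iInter fun i => isClosed_iInter fun j =>
        isClosed_le continuous_const (entry_cont i j)
    have h2 : IsClosed {A : Matrix (Fin a) (Fin b) ℝ | ∀ j, ∑ i, A i j = 1} := by
      have : {A : Matrix (Fin a) (Fin b) ℝ | ∀ j, ∑ i, A i j = 1} =
          ⋂ j, {A : Matrix (Fin a) (Fin b) ℝ | ∑ i, A i j = 1} := by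
        ext A; simp
      rw [this]
      exact isClosed_iInter fun j =>
        isClosed_eq (continuous_finset_sum _ fun i _ => entry_cont i j) continuous_const
    exact h1.inter h2
  · rintro A ⟨h0, h1⟩ i j
    refine ⟨h0 i j, ?_⟩
    rw [← h1 j]
    exact Finset.single_le_sum (fun i' _ => h0 i' j) (Finset.mem_univ i)

lemma exists_min {n m k c : ℕ} (hk : 0 < k) (hn : 0 < n) (hc : 0 < c)
    (X : Matrix (Fin n) (Fin m) ℝ) (V : Matrix (Fin n) (Fin c) ℝ) :
    ∃ (α : Matrix (Fin n) (Fin k) ℝ) (β : Matrix (Fin k) (Fin n) ℝ)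
      (γ : Matrix (Fin c) (Fin m) ℝ),
      RowStoch α ∧ RowStoch β ∧ ColStoch γ ∧
      ∀ (α' : Matrix (Fin n) (Fin k) ℝ) (β' : Matrix (Fin k) (Fin n) ℝ)
        (γ' : Matrix (Fin c) (Fin m) ℝ), RowStoch α' → RowStoch β' → ColStoch γ' →
        frob2 (X - α * (β * V) * γ) ≤ frob2 (X - α' * (β' * V) * γ') := by
  have hScpt : IsCompact ({A : Matrix (Fin n) (Fin k) ℝ | RowStoch A} ×ˢ
      ({B : Matrix (Fin k) (Fin n) ℝ | RowStoch B} ×ˢ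
       {C : Matrix (Fin c) (Fin m) ℝ | ColStoch C})) :=
    isCompact_rowStoch.prod (isCompact_rowStoch.prod isCompact_colStoch)
  have hSne : ({A : Matrix (Fin n) (Fin k) ℝ | RowStoch A} ×ˢ
      ({B : Matrix (Fin k) (Fin n) ℝ | RowStoch B} ×ˢ
       {C : Matrix (Fin c) (Fin m) ℝ | ColStoch C})).Nonempty := by
    refine ⟨⟨fun _ _ => (k:ℝ)⁻¹, fun _ _ => (n:ℝ)⁻¹, fun _ _ => (c:ℝ)⁻¹⟩, ?_, ?_, ?_⟩
    · exact ⟨fun _ _ => by positivity, fun i => by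
        simp only [Finset.sum_const, Finset.card_univ, Fintype.card_fin, nsmul_eq_mul]
        rw [mul_inv_cancel₀ (by exact_mod_cast hk.ne')]⟩
    · exact ⟨fun _ _ => by positivity, fun i => by
        simp only [Finset.sum_const, Finset.card_univ, Fintype.card_fin, nsmul_eq_mul]
        rw [mul_inv_cancel₀ (by exact_mod_cast hn.ne')]⟩
    · exact ⟨fun _ _ => by positivity, fun i => by
        simp only [Finset.sum_const, Finset.card_univ, Fintype.card_fin, nsmul_eq_mul]
        rw [mul_inv_cancel₀ (by exact_mod_cast hc.ne')]⟩
  have hfc : Continuous (fun q : (Matrix (Fin n) (Fin k) ℝ ×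
      (Matrix (Fin k) (Fin n) ℝ × Matrix (Fin c) (Fin m) ℝ)) =>
      frob2 (X - q.1 * (q.2.1 * V) * q.2.2)) := by
    unfold frob2
    have h1 : Continuous fun q : (Matrix (Fin n) (Fin k) ℝ ×
        (Matrix (Fin k) (Fin n) ℝ × Matrix (Fin c) (Fin m) ℝ)) =>
        q.1 * (q.2.1 * V) * q.2.2 :=
      (continuous_fst.matrix_mul
        ((continuous_fst.comp continuous_snd).matrix_mul continuous_const)).matrix_mul
        (continuous_snd.comp continuous_snd)
    have h2 : Continuous fun q : (Matrix (Fin n) (Fin k) ℝ ×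
        (Matrix (Fin k) (Fin n) ℝ × Matrix (Fin c) (Fin m) ℝ)) =>
        X - q.1 * (q.2.1 * V) * q.2.2 := continuous_const.sub h1
    apply continuous_finset_sum
    intro i _
    apply continuous_finset_sum
    intro j _
    exact (h2.matrix_elem i j).pow 2
  obtain ⟨q, hqS, hqmin⟩ := hScpt.exists_isMinOn hSne hfc.continuousOn
  obtain ⟨hqα, hqβ, hqγ⟩ := hqS
  exact ⟨q.1, q.2.1, q.2.2, hqα, hqβ, hqγ, fun α' β' γ' hα' hβ' hγ' =>
    (isMinOn_iff.mp hqmin) (α', β', γ') (Set.mem_prod.mpr ⟨hα', Set.mem_prod.mpr ⟨hβ', hγ'⟩⟩)⟩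

/-- Proposition 1: with θ fixed column-stochastic and V = Xθ, there exist optimal
row-stochastic α, β and column-stochastic γ minimizing ‖X − α(βV)γ‖² such that every
row of the biarchetype matrix Z = βXθ lies on the frontier of the convex hull of the
rows of V. -/
theorem stmt_0 (n m k c : ℕ) (hk1 : 1 < k) (hkn : k < n) (hc1 : 1 < c) (hcm : c < m)
    (X : Matrix (Fin n) (Fin m) ℝ) (θ : Matrix (Fin m) (Fin c) ℝ) (hθ : ColStoch θ) :
    ∃ (α : Matrix (Fin n) (Fin k) ℝ) (β : Matrix (Fin k) (Fin n) ℝ)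
      (γ : Matrix (Fin c) (Fin m) ℝ),
      RowStoch α ∧ RowStoch β ∧ ColStoch γ ∧
      (∀ (α' : Matrix (Fin n) (Fin k) ℝ) (β' : Matrix (Fin k) (Fin n) ℝ)
         (γ' : Matrix (Fin c) (Fin m) ℝ),
        RowStoch α' → RowStoch β' → ColStoch γ' →
        frob2 (X - α * (β * (X * θ)) * γ) ≤ frob2 (X - α' * (β' * (X * θ)) * γ')) ∧
      (∀ g : Fin k,
        (β * (X * θ)) g ∈
          frontier (convexHull ℝ (Set.range fun i : Fin n => (X * θ) i))) := by
  have hn0 : 0 < n := by omega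
  have hk0 : 0 < k := by omega
  have hc0 : 0 < c := by omega
  obtain ⟨α, β, γ, hα, hβ, hγ, hmin⟩ := exists_min (k := k) hk0 hn0 hc0 X (X * θ)
  set V := X * θ with hV
  set W : Fin n → Fin c → ℝ := fun i => V i with hW
  have hZH : ∀ g, (β * V) g ∈ convexHull ℝ (Set.range W) :=
    fun g => row_mul_mem_hull β hβ.1 hβ.2 V g
  obtain ⟨α', Z', hα'st, hZ'H, hZ'fr, hfit⟩ :=
    boundarize (by omega) (by omega) W k α (fun g => (β * V) g) hα hZH
      (fun g hg => absurd g.isLt (by omega))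
  choose w hw0 hw1 hwx using fun g => mem_hull_weights W (hZ'H g)
  set β' : Matrix (Fin k) (Fin n) ℝ := fun g i => w g i with hβ'
  have hβ'st : RowStoch β' := ⟨fun g i => hw0 g i, fun g => hw1 g⟩
  have hrow : ∀ g, (β' * V) g = Z' g := by
    intro g; funext j
    have h := congrFun (hwx g) j
    rw [Finset.sum_apply] at h
    rw [← h]
    simp [Matrix.mul_apply, hβ', hW, smul_eq_mul]
    rfl
  have hprod : α' * (β' * V) = α * (β * V) := by
    ext r j
    rw [Matrix.mul_apply, Matrix.mul_apply]
    have h1 := congrFun (hfit r) j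
    rw [Finset.sum_apply, Finset.sum_apply] at h1
    calc ∑ g, α' r g * (β' * V) g j = ∑ g, α' r g * Z' g j :=
          Finset.sum_congr rfl fun g _ => by rw [hrow g]
      _ = ∑ g, α r g * (β * V) g j := by
          simpa [Pi.smul_apply, smul_eq_mul] using h1
  refine ⟨α', β', γ, hα'st, hβ'st, hγ, ?_, ?_⟩
  · intro α'' β'' γ'' h1 h2 h3
    have heq : α' * (β' * V) * γ = α * (β * V) * γ := by rw [hprod]
    rw [heq]
    exact hmin α'' β'' γ'' h1 h2 h3
  · intro g
    have : (β' * V) g ∈ frontier (convexHull ℝ (Set.range W)) := by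
      rw [hrow g]; exact hZ'fr g
    exact this
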